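/- Let A and B be finite nonempty index types, let U be a unitary complex matrix indexed by A × B, let σ be a positive semidefinite complex matrix indexed by A × B, and let D be a real diagonal matrix indexed by B with 0 ⪯ D ⪯ I. Define ρ_D = Tr_B(U σ U† (I_A ⊗ D)) and ρ_I = Tr_B(U σ U†), where Tr_B denotes the partial trace over B, i.e. (Tr_B M)(a,a') = ∑_{b} M((a,b),(a',b)). Then ρ_I − ρ_D is positive semidefinite, i.e. ρ_D ⪯ ρ_I in the Loewner order. -/

import Mathlib

open Matrix ComplexOrder Kronecker

/-- Partial trace over the second factor `B` of a matrix indexed by `A × B`. -/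
noncomputable def ptraceB {A B : Type*} [Fintype A] [Fintype B]
    (M : Matrix (A × B) (A × B) ℂ) : Matrix A A ℂ :=
  Matrix.of fun a a' => ∑ b : B, M (a, b) (a', b)

lemma psd_real_smul {n : Type*} [Fintype n] {M : Matrix n n ℂ} (hM : M.PosSemidef)
    {c : ℝ} (hc : 0 ≤ c) : ((c : ℂ) • M).PosSemidef := by
  rw [posSemidef_iff_dotProduct_mulVec]
  constructor
  · unfold Matrix.IsHermitian
    rw [conjTranspose_smul, hM.1.eq]
    congr 1
    simp
  · intro x
    rw [smul_mulVec, dotProduct_smul]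
    have := hM.dotProduct_mulVec_nonneg x
    have hc' : (0:ℂ) ≤ (c:ℂ) := by exact_mod_cast hc
    exact mul_nonneg hc' this

theorem postSelected_le_partialTrace
    {A B : Type*} [Fintype A] [Fintype B] [Nonempty A] [Nonempty B]
    [DecidableEq A] [DecidableEq B]
    (U : Matrix (A × B) (A × B) ℂ) (hU : U ∈ Matrix.unitaryGroup (A × B) ℂ)
    (σ : Matrix (A × B) (A × B) ℂ) (hσ : σ.PosSemidef)
    (d : B → ℝ) (hd0 : ∀ b, 0 ≤ d b) (hd1 : ∀ b, d b ≤ 1) :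
    (ptraceB (U * σ * Uᴴ) -
      ptraceB (U * σ * Uᴴ * ((1 : Matrix A A ℂ) ⊗ₖ
        Matrix.diagonal fun b => (d b : ℂ)))).PosSemidef := by
  set M := U * σ * Uᴴ with hMdef
  have hM : M.PosSemidef := hσ.mul_mul_conjTranspose_same U
  have key : ptraceB M - ptraceB (M * ((1 : Matrix A A ℂ) ⊗ₖ
      Matrix.diagonal fun b => (d b : ℂ))) =
      ∑ b : B, ((1 - d b : ℝ) : ℂ) •
        (M.submatrix (fun a : A => (a, b)) (fun a : A => (a, b))) := by
    ext a a'
    simp only [ptraceB, Matrix.sub_apply, Matrix.of_apply, Matrix.sum_apply,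
      Matrix.smul_apply, Matrix.submatrix_apply, smul_eq_mul]
    have hentry : ∀ b : B, (M * ((1 : Matrix A A ℂ) ⊗ₖ
        Matrix.diagonal fun b => (d b : ℂ))) (a, b) (a', b) =
        M (a, b) (a', b) * (d b : ℂ) := by
      intro b
      rw [Matrix.mul_apply]
      rw [Fintype.sum_prod_type]
      rw [Finset.sum_eq_single a']
      · rw [Finset.sum_eq_single b]
        · simp [Matrix.one_apply, Matrix.diagonal_apply]
        · intro b' _ hb'
          simp [Matrix.diagonal_apply, hb']
        · simp
      · intro a'' _ ha''
        apply Finset.sum_eq_zero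
        intro b' _
        simp [Matrix.one_apply, ha'']
      · simp
    simp only [hentry]
    rw [← Finset.sum_sub_distrib]
    congr 1
    ext b
    push_cast
    ring
  rw [key]
  refine Finset.sum_induction _ (fun N : Matrix A A ℂ => N.PosSemidef) (fun x y hx hy => hx.add hy)
    Matrix.PosSemidef.zero ?_
  intro b _
  exact psd_real_smul (hM.submatrix _) (by linarith [hd1 b])
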